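/- Let c₀, c₁, c₂ ∈ ℂ, F(t) = t³ + c₂t² + c₁t + c₀, let (z, w) ∈ ℂ² satisfy w² = F(z), and let α, β : ℤ → ℂ satisfy β(n)² = F(α(n)), α(n) ≠ α(n+1), and z ≠ α(n) for all n ∈ ℤ. Define χ(n) = (w + β(n))/(z − α(n)) + (β(n) + β(n+1))/(α(n) − α(n+1)), U(n) = (β(n) + β(n+1))/(α(n+1) − α(n)), W(n) = −c₂ − α(n) − α(n+1). If ψ : ℤ → ℂ satisfies ψ(n+1) = χ(n)·ψ(n) for all n ∈ ℤ, then for all n ∈ ℤ: ψ(n+2) + (U(n) + U(n+1))·ψ(n+1) + (U(n)² + W(n))·ψ(n) = z·ψ(n), i.e., L₂ψ = z·ψ. -/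

import Mathlib

/-- In the elliptic example, a sequence `ψ` built from the quotient
`χ n = (w + βₙ)/(z − αₙ) + (βₙ + βₙ₊₁)/(αₙ − αₙ₊₁)` via `ψ (n+1) = χ n * ψ n`
is an eigenfunction of the order-2 operator `L₂ = (T + Uₙ)² + Wₙ` with eigenvalue `z`:
`ψ(n+2) + (Uₙ + Uₙ₊₁) ψ(n+1) + (Uₙ² + Wₙ) ψ(n) = z ψ(n)`. -/
theorem elliptic_L2_eigen
    (c₀ c₁ c₂ : ℂ) (z w : ℂ)
    (hzw : w ^ 2 = z ^ 3 + c₂ * z ^ 2 + c₁ * z + c₀)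
    (α β : ℤ → ℂ)
    (hcurve : ∀ n : ℤ, (β n) ^ 2 = (α n) ^ 3 + c₂ * (α n) ^ 2 + c₁ * (α n) + c₀)
    (hα : ∀ n : ℤ, α n ≠ α (n + 1))
    (hz : ∀ n : ℤ, z ≠ α n)
    (χ U W : ℤ → ℂ)
    (hχ : ∀ n : ℤ, χ n = (w + β n) / (z - α n) + (β n + β (n + 1)) / (α n - α (n + 1)))
    (hU : ∀ n : ℤ, U n = (β n + β (n + 1)) / (α (n + 1) - α n))
    (hW : ∀ n : ℤ, W n = -c₂ - α n - α (n + 1))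
    (ψ : ℤ → ℂ) (hψ : ∀ n : ℤ, ψ (n + 1) = χ n * ψ n) :
    ∀ n : ℤ, ψ (n + 2) + (U n + U (n + 1)) * ψ (n + 1) + ((U n) ^ 2 + W n) * ψ n
      = z * ψ n := by
  intro n
  have h2 : (n : ℤ) + 2 = (n + 1) + 1 := by ring
  have hψ2 : ψ (n + 2) = χ (n + 1) * (χ n * ψ n) := by
    rw [h2, hψ (n + 1), hψ n]
  have e1 : z - α n ≠ 0 := sub_ne_zero.mpr (hz n)
  have e2 : z - α (n + 1) ≠ 0 := sub_ne_zero.mpr (hz (n + 1))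
  have e5 : α (n + 1) - α n ≠ 0 := fun h => hα n (sub_eq_zero.mp h).symm
  -- χ m = (w + β m)/(z - α m) - U m
  have hχU : ∀ m : ℤ, χ m = (w + β m) / (z - α m) - U m := by
    intro m
    rw [hχ m, hU m, show α m - α (m + 1) = -(α (m + 1) - α m) by ring, div_neg]
    ring
  have key2 : (w + β (n + 1)) / (z - α (n + 1)) * ((w + β n) / (z - α n))
      + (β n + β (n + 1)) / (α (n + 1) - α n)
        * ((w + β n) / (z - α n) - (w + β (n + 1)) / (z - α (n + 1)))
      + W n = z := by
    rw [hW n]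
    field_simp
    linear_combination
      ((α (n + 1) - α n) * hzw + (z - α (n + 1)) * hcurve n + (α n - z) * hcurve (n + 1))
  have key : χ (n + 1) * χ n + (U n + U (n + 1)) * χ n + (U n) ^ 2 + W n = z := by
    rw [hχU (n + 1), hχU n, hU n]
    linear_combination key2
  rw [hψ2, hψ n, ← key]
  ring
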